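/- For positive integers a, b, c, the expression H(a+b+c)·H(a)·H(b)·H(c) / (H(a+b)·H(b+c)·H(c+a)) is a positive integer. -/
import Mathlib


/-- The hyperfactorial `H(p) = ∏_{j=0}^{p-1} j!`. -/
def hyperfactorial (p : ℕ) : ℕ := ∏ j ∈ Finset.range p, Nat.factorial j

/-- Auxiliary: `∑_{j<n} ⌊j/q⌋`. -/
def hfG (q n : ℕ) : ℕ := ∑ j ∈ Finset.range n, j / q

lemma hfG_shift (q n : ℕ) (hq : 0 < q) : hfG q (q + n) = hfG q n + n := by
  unfold hfG
  rw [Finset.sum_range_add]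
  have h1 : ∑ j ∈ Finset.range q, j / q = 0 :=
    Finset.sum_eq_zero fun j hj => Nat.div_eq_of_lt (Finset.mem_range.mp hj)
  have h2 : ∀ i, (q + i) / q = i / q + 1 := fun i => by
    rw [add_comm, Nat.add_div_right _ hq]
  simp only [h2, h1, Finset.sum_add_distrib, Finset.sum_const, Finset.card_range,
    smul_eq_mul, mul_one, zero_add]

lemma hfG_small (q : ℕ) (hq : 0 < q) : ∀ n, n ≤ 3 * q → hfG q n = (n - q) + (n - 2 * q) := by
  intro n
  induction n with
  | zero => intro _; simp [hfG]
  | succ n ih =>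
    intro h
    have e : hfG q (n + 1) = hfG q n + n / q := Finset.sum_range_succ _ n
    have ihh := ih (by omega)
    have hd : (n / q = 0 ∧ n < q) ∨ (n / q = 1 ∧ q ≤ n ∧ n < 2 * q)
        ∨ (n / q = 2 ∧ 2 * q ≤ n) := by
      rcases lt_or_ge n q with h1 | h1
      · exact Or.inl ⟨Nat.div_eq_of_lt h1, h1⟩
      rcases lt_or_ge n (2 * q) with h2 | h2
      · exact Or.inr (Or.inl ⟨Nat.div_eq_of_lt_le (by omega) (by omega), h1, h2⟩)
      · exact Or.inr (Or.inr ⟨Nat.div_eq_of_lt_le (by omega) (by omega), h2⟩)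
    rcases hd with ⟨h0, h0'⟩ | ⟨h1, h1'⟩ | ⟨h2, h2'⟩ <;>
      [rw [h0] at e; rw [h1] at e; rw [h2] at e] <;> omega

lemma hfG_key (q : ℕ) (hq : 0 < q) (a b c : ℕ) :
    hfG q (a + b) + hfG q (b + c) + hfG q (c + a)
      ≤ hfG q (a + b + c) + hfG q a + hfG q b + hfG q c := by
  suffices H : ∀ n a b c : ℕ, a + b + c ≤ n →
      hfG q (a + b) + hfG q (b + c) + hfG q (c + a)
        ≤ hfG q (a + b + c) + hfG q a + hfG q b + hfG q c from
    H (a + b + c) a b c le_rfl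
  intro n
  induction n with
  | zero =>
    intro a b c h
    obtain ⟨rfl, rfl, rfl⟩ : a = 0 ∧ b = 0 ∧ c = 0 := by omega
    simp [hfG]
  | succ n ih =>
    intro a b c h
    by_cases hA : q ≤ a
    · obtain ⟨a', rfl⟩ : ∃ a', a = q + a' := ⟨a - q, by omega⟩
      have e1 : hfG q (q + a' + b) = hfG q (a' + b) + (a' + b) := by
        rw [show q + a' + b = q + (a' + b) by omega, hfG_shift q _ hq]
      have e2 : hfG q (c + (q + a')) = hfG q (c + a') + (c + a') := by
        rw [show c + (q + a') = q + (c + a') by omega, hfG_shift q _ hq]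
      have e3 : hfG q (q + a' + b + c) = hfG q (a' + b + c) + (a' + b + c) := by
        rw [show q + a' + b + c = q + (a' + b + c) by omega, hfG_shift q _ hq]
      have e4 : hfG q (q + a') = hfG q a' + a' := hfG_shift q a' hq
      have := ih a' b c (by omega)
      omega
    by_cases hB : q ≤ b
    · obtain ⟨b', rfl⟩ : ∃ b', b = q + b' := ⟨b - q, by omega⟩
      have e1 : hfG q (a + (q + b')) = hfG q (a + b') + (a + b') := by
        rw [show a + (q + b') = q + (a + b') by omega, hfG_shift q _ hq]
      have e2 : hfG q (q + b' + c) = hfG q (b' + c) + (b' + c) := by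
        rw [show q + b' + c = q + (b' + c) by omega, hfG_shift q _ hq]
      have e3 : hfG q (a + (q + b') + c) = hfG q (a + b' + c) + (a + b' + c) := by
        rw [show a + (q + b') + c = q + (a + b' + c) by omega, hfG_shift q _ hq]
      have e4 : hfG q (q + b') = hfG q b' + b' := hfG_shift q b' hq
      have := ih a b' c (by omega)
      omega
    by_cases hC : q ≤ c
    · obtain ⟨c', rfl⟩ : ∃ c', c = q + c' := ⟨c - q, by omega⟩
      have e1 : hfG q (b + (q + c')) = hfG q (b + c') + (b + c') := by
        rw [show b + (q + c') = q + (b + c') by omega, hfG_shift q _ hq]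
      have e2 : hfG q (q + c' + a) = hfG q (c' + a) + (c' + a) := by
        rw [show q + c' + a = q + (c' + a) by omega, hfG_shift q _ hq]
      have e3 : hfG q (a + b + (q + c')) = hfG q (a + b + c') + (a + b + c') := by
        rw [show a + b + (q + c') = q + (a + b + c') by omega, hfG_shift q _ hq]
      have e4 : hfG q (q + c') = hfG q c' + c' := hfG_shift q c' hq
      have := ih a b c' (by omega)
      omega
    · push_neg at hA hB hC
      rw [hfG_small q hq (a + b) (by omega), hfG_small q hq (b + c) (by omega),
        hfG_small q hq (c + a) (by omega), hfG_small q hq (a + b + c) (by omega),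
        hfG_small q hq a (by omega), hfG_small q hq b (by omega),
        hfG_small q hq c (by omega)]
      omega

lemma hyperfactorial_pos (n : ℕ) : 0 < hyperfactorial n :=
  Finset.prod_pos fun j _ => Nat.factorial_pos j

lemma hyperfactorial_factorization {p : ℕ} (hp : p.Prime) (n B : ℕ) (hB : n < B) :
    (hyperfactorial n).factorization p = ∑ i ∈ Finset.Ico 1 B, hfG (p ^ i) n := by
  haveI : Fact p.Prime := ⟨hp⟩
  rw [hyperfactorial, Nat.factorization_prod fun j _ => (Nat.factorial_pos j).ne']
  rw [Finset.sum_apply']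
  have h : ∀ j ∈ Finset.range n, (Nat.factorial j).factorization p
      = ∑ i ∈ Finset.Ico 1 B, j / p ^ i := by
    intro j hj
    rw [Nat.factorization_def _ hp]
    exact padicValNat_factorial (lt_of_le_of_lt (Nat.log_le_self p j)
      (lt_of_lt_of_le (Finset.mem_range.mp hj) (le_of_lt hB)))
  rw [Finset.sum_congr rfl h, Finset.sum_comm]
  rfl

/-- For positive `a`, `b`, `c`, the quantity
`H(a+b+c)·H(a)·H(b)·H(c) / (H(a+b)·H(b+c)·H(c+a))` is a positive integer:
the denominator divides the numerator in `ℕ`, with positive quotient. -/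
theorem hyperfactorial_quotient_is_positive_integer (a b c : ℕ)
    (ha : 0 < a) (hb : 0 < b) (hc : 0 < c) :
    ∃ m : ℕ, 0 < m ∧
      hyperfactorial (a + b + c) * hyperfactorial a * hyperfactorial b * hyperfactorial c =
        hyperfactorial (a + b) * hyperfactorial (b + c) * hyperfactorial (c + a) * m := by
  set num := hyperfactorial (a + b + c) * hyperfactorial a * hyperfactorial b * hyperfactorial c
    with hnum
  set den := hyperfactorial (a + b) * hyperfactorial (b + c) * hyperfactorial (c + a) with hden
  have hnum_pos : 0 < num := by
    refine Nat.mul_pos (Nat.mul_pos (Nat.mul_pos ?_ ?_) ?_) ?_ <;> exact hyperfactorial_pos _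
  have hden_pos : 0 < den := by
    refine Nat.mul_pos (Nat.mul_pos ?_ ?_) ?_ <;> exact hyperfactorial_pos _
  have hdvd : den ∣ num := by
    rw [← Nat.factorization_le_iff_dvd hden_pos.ne' hnum_pos.ne']
    rw [Finsupp.le_def]
    intro p
    by_cases hp : p.Prime
    · have hne : ∀ n : ℕ, hyperfactorial n ≠ 0 := fun n => (hyperfactorial_pos n).ne'
      have key4 : ∀ x y z w : ℕ, (hyperfactorial x * hyperfactorial y * hyperfactorial z *
          hyperfactorial w).factorization = (hyperfactorial x).factorization +
          (hyperfactorial y).factorization + (hyperfactorial z).factorization +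
          (hyperfactorial w).factorization := by
        intro x y z w
        rw [Nat.factorization_mul (mul_ne_zero (mul_ne_zero (hne _) (hne _)) (hne _)) (hne _),
          Nat.factorization_mul (mul_ne_zero (hne _) (hne _)) (hne _),
          Nat.factorization_mul (hne _) (hne _)]
      have key3 : ∀ x y z : ℕ, (hyperfactorial x * hyperfactorial y *
          hyperfactorial z).factorization = (hyperfactorial x).factorization +
          (hyperfactorial y).factorization + (hyperfactorial z).factorization := by
        intro x y z
        rw [Nat.factorization_mul (mul_ne_zero (hne _) (hne _)) (hne _),
          Nat.factorization_mul (hne _) (hne _)]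
      rw [hnum, hden, key4, key3]
      simp only [Finsupp.add_apply]
      set B := a + b + c + 1 with hB
      rw [hyperfactorial_factorization hp (a + b + c) B (by omega),
        hyperfactorial_factorization hp a B (by omega),
        hyperfactorial_factorization hp b B (by omega),
        hyperfactorial_factorization hp c B (by omega),
        hyperfactorial_factorization hp (a + b) B (by omega),
        hyperfactorial_factorization hp (b + c) B (by omega),
        hyperfactorial_factorization hp (c + a) B (by omega)]
      have hle := Finset.sum_le_sum (s := Finset.Ico 1 B)
        (f := fun i => hfG (p ^ i) (a + b) + hfG (p ^ i) (b + c) + hfG (p ^ i) (c + a))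
        (g := fun i => hfG (p ^ i) (a + b + c) + hfG (p ^ i) a + hfG (p ^ i) b + hfG (p ^ i) c)
        (fun i _ => hfG_key (p ^ i) (pow_pos hp.pos i) a b c)
      simpa [Finset.sum_add_distrib] using hle
    · simp [Nat.factorization_eq_zero_of_not_prime _ hp]
  refine ⟨num / den, Nat.div_pos (Nat.le_of_dvd hnum_pos hdvd) hden_pos, ?_⟩
  rw [Nat.mul_div_cancel' hdvd]
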